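/- If U is a negative multiset on ℕ², then BRSK(U) is a negative semistandard notched bitableau. -/

import Mathlib

def RowStrictT (P : List (List ℕ)) : Prop :=
  ∀ r ∈ P, List.Chain' (· < ·) r

def PosEntries (P : List (List ℕ)) : Prop := ∀ r ∈ P, ∀ x ∈ r, 0 < x

def below (P : List (List ℕ)) (b : ℕ) : List (List ℕ) :=
  P.map (List.filter (fun x => decide (x < b)))

/-- Schensted insertion with bumping route (column indices, one per row of the
route; the new box is in row `route.length - 1`, column `route.getLast`). -/
def ins : List (List ℕ) → ℕ → List (List ℕ) × List ℕ
  | [], a => ([[a]], [0])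
  | r :: rs, a =>
    match r.findIdx? (fun x => decide (a ≤ x)) with
    | none => ((r ++ [a]) :: rs, [r.length])
    | some j =>
      let p := ins rs (r.getD j 0)
      ((r.set j a) :: p.1, j :: p.2)

/-- Bounded insertion `P ←_b a`. -/
def bins (P : List (List ℕ)) (b a : ℕ) : List (List ℕ) × List ℕ :=
  let T := ins (below P b) a
  ((List.range T.1.length).map
      (fun i => T.1.getD i [] ++ (P.getD i []).filter (fun x => decide (b ≤ x))),
    T.2)

/-- One step of the bounded RSK: `(P,Q) ←_b a`: boundedly insert `a` into `P`
with bound `b`, and prepend `b` to the row of `Q` containing the new box. -/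
def BRSKstep (PQ : List (List ℕ) × List (List ℕ)) (ab : ℕ × ℕ) :
    List (List ℕ) × List (List ℕ) :=
  let r := bins PQ.1 ab.2 ab.1
  let k := r.2.length - 1
  (r.1, if k < PQ.2.length then PQ.2.set k (ab.2 :: PQ.2.getD k [])
        else PQ.2 ++ [[ab.2]])

/-- The bounded RSK of a list of pairs (to be taken in lexicographic order). -/
def BRSK (l : List (ℕ × ℕ)) : List (List ℕ) × List (List ℕ) :=
  l.foldl BRSKstep ([], [])

/-- Lexicographic order of the paper: `b`'s weakly decreasing, and for equal
`b`'s the `a`'s weakly decreasing. -/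
def LexSorted (l : List (ℕ × ℕ)) : Prop :=
  l.Pairwise (fun x y => y.2 < x.2 ∨ (x.2 = y.2 ∧ y.1 ≤ x.1))

/-- Termwise order on finite multisets on ℕ. -/
noncomputable def twLE (A B : Multiset ℕ) : Prop :=
  Multiset.card A = Multiset.card B ∧
    ∀ i, (A.sort (· ≤ ·)).getD i 0 ≤ (B.sort (· ≤ ·)).getD i 0

def SameShape (P Q : List (List ℕ)) : Prop :=
  P.length = Q.length ∧ ∀ i, (P.getD i []).length = (Q.getD i []).length

noncomputable def SemistandardNB (P Q : List (List ℕ)) : Prop :=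
  ∀ i, i + 1 < P.length →
    twLE ((P.getD i [] : Multiset ℕ) + (Q.getD (i + 1) [] : Multiset ℕ))
      ((P.getD (i + 1) [] : Multiset ℕ) + (Q.getD i [] : Multiset ℕ))

def NegativeNB (P Q : List (List ℕ)) : Prop :=
  ∀ i, i < P.length → ∀ j, j < (P.getD i []).length →
    (P.getD i []).getD j 0 < (Q.getD i []).getD j 0

/-- Negative semistandard notched bitableau (with positive entries and
nonempty rows). -/
noncomputable def IsNegSSNB (PQ : List (List ℕ) × List (List ℕ)) : Prop :=
  SameShape PQ.1 PQ.2 ∧ RowStrictT PQ.1 ∧ RowStrictT PQ.2 ∧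
    PosEntries PQ.1 ∧ PosEntries PQ.2 ∧ (∀ r ∈ PQ.1, r ≠ []) ∧
    SemistandardNB PQ.1 PQ.2 ∧ NegativeNB PQ.1 PQ.2


namespace BRSKaux

open List




def cnt (r : List ℕ) (τ : ℕ) : ℕ := r.countP (fun x => decide (x ≤ τ))

lemma cnt_le_length (r : List ℕ) (τ : ℕ) : cnt r τ ≤ r.length := countP_le_length

lemma cnt_append (l l' : List ℕ) (τ : ℕ) : cnt (l ++ l') τ = cnt l τ + cnt l' τ :=
  countP_append

lemma cnt_cons (x : ℕ) (l : List ℕ) (τ : ℕ) :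
    cnt (x :: l) τ = cnt l τ + (if x ≤ τ then 1 else 0) := by
  simp [cnt, countP_cons]

lemma cnt_nil (τ : ℕ) : cnt [] τ = 0 := rfl

lemma cnt_eq_zero {r : List ℕ} {τ : ℕ} (h : ∀ x ∈ r, τ < x) : cnt r τ = 0 := by
  simp only [cnt, countP_eq_zero]
  intro x hx
  simpa using (h x hx).not_ge

lemma cnt_eq_length {r : List ℕ} {τ : ℕ} (h : ∀ x ∈ r, x ≤ τ) : cnt r τ = r.length := by
  simp only [cnt, countP_eq_length]
  intro x hx
  simpa using h x hx

lemma le_cnt {r : List ℕ} {τ j : ℕ} (hj : j ≤ r.length)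
    (h : ∀ i, i < j → r.getD i 0 ≤ τ) : j ≤ cnt r τ := by
  have h1 : cnt (r.take j) τ = (r.take j).length := by
    apply cnt_eq_length
    intro x hx
    obtain ⟨i, hi, rfl⟩ := List.getElem_of_mem hx
    have hij : i < j := lt_of_lt_of_le hi (by simp)
    have hir : i < r.length := lt_of_lt_of_le hij hj
    rw [List.getElem_take]
    rw [← List.getD_eq_getElem r 0 hir]
    exact h i hij
  have h2 : (r.take j).length = j := by simp [hj]
  calc j = cnt (r.take j) τ := by rw [h1, h2]
    _ ≤ cnt (r.take j) τ + cnt (r.drop j) τ := Nat.le_add_right _ _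
    _ = cnt r τ := by rw [← cnt_append, List.take_append_drop]

lemma cnt_le {r : List ℕ} {τ j : ℕ}
    (h : ∀ i, j ≤ i → i < r.length → τ < r.getD i 0) : cnt r τ ≤ j := by
  have h0 : cnt (r.drop j) τ = 0 := by
    apply cnt_eq_zero
    intro x hx
    obtain ⟨i, hi, rfl⟩ := List.getElem_of_mem hx
    have hji : j + i < r.length := by
      have := hi; simp at this; omega
    rw [List.getElem_drop]
    rw [← List.getD_eq_getElem r 0 hji]
    exact h (j + i) (Nat.le_add_right _ _) hji
  calc cnt r τ = cnt (r.take j) τ + cnt (r.drop j) τ := by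
        rw [← cnt_append, List.take_append_drop]
    _ = cnt (r.take j) τ := by rw [h0]; omega
    _ ≤ (r.take j).length := cnt_le_length _ _
    _ ≤ j := by simp

lemma sorted_getD_le {r : List ℕ} (hs : List.Pairwise (· ≤ ·) r) {i j : ℕ}
    (hij : i ≤ j) (hj : j < r.length) : r.getD i 0 ≤ r.getD j 0 := by
  rcases eq_or_lt_of_le hij with rfl | hij'
  · exact le_refl _
  · have hi : i < r.length := by omega
    rw [List.getD_eq_getElem r 0 hi, List.getD_eq_getElem r 0 hj]
    exact List.pairwise_iff_getElem.1 hs i j hi hj hij'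

lemma cnt_le_sorted {r : List ℕ} {τ j : ℕ} (hs : List.Pairwise (· ≤ ·) r)
    (hj : j < r.length) (hτ : τ < r.getD j 0) : cnt r τ ≤ j := by
  apply cnt_le
  intro i hji hi
  exact lt_of_lt_of_le hτ (sorted_getD_le hs hji hi)

lemma getD_le_of_lt_cnt {r : List ℕ} {τ j : ℕ} (hs : List.Pairwise (· ≤ ·) r)
    (hj : j < cnt r τ) : r.getD j 0 ≤ τ := by
  by_contra hc
  push_neg at hc
  have hjr : j < r.length := lt_of_lt_of_le hj (cnt_le_length _ _)
  exact absurd (cnt_le_sorted hs hjr hc) (by omega)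

lemma cnt_set {r : List ℕ} {j v τ : ℕ} (hj : j < r.length) (hv : v ≤ r.getD j 0) :
    cnt (r.set j v) τ = cnt r τ + (if v ≤ τ ∧ τ < r.getD j 0 then 1 else 0) := by
  have hset : r.set j v = r.take j ++ v :: r.drop (j + 1) := by
    rw [List.set_eq_take_append_cons_drop, if_pos hj]
  obtain ⟨x, hx⟩ : ∃ x, r.getD j 0 = x := ⟨_, rfl⟩
  have hr : r = r.take j ++ x :: r.drop (j + 1) := by
    conv_lhs => rw [← List.take_append_drop j r]
    rw [List.drop_eq_getElem_cons hj, ← List.getD_eq_getElem r 0 hj, hx]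
  rw [hx, hset]
  conv_rhs => rw [hr]
  rw [cnt_append, cnt_append, cnt_cons, cnt_cons]
  split_ifs <;> omega

lemma filter_lt_append_filter_ge {r : List ℕ} (b : ℕ) (hs : List.Pairwise (· ≤ ·) r) :
    r.filter (fun x => decide (x < b)) ++ r.filter (fun x => decide (b ≤ x)) = r := by
  induction r with
  | nil => rfl
  | cons a r ih =>
    rw [List.pairwise_cons] at hs
    rcases Nat.lt_or_ge a b with h | h
    · simp only [List.filter_cons, decide_eq_true_eq]
      rw [if_pos h, if_neg (by omega)]
      simpa using ih hs.2
    · simp only [List.filter_cons, decide_eq_true_eq]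
      rw [if_neg (by omega), if_pos h]
      have h1 : r.filter (fun x => decide (x < b)) = [] := by
        rw [List.filter_eq_nil_iff]
        intro x hx
        have := hs.1 x hx
        simp; omega
      have h2 : r.filter (fun x => decide (b ≤ x)) = r := by
        rw [List.filter_eq_self]
        intro x hx
        have := hs.1 x hx
        simp; omega
      rw [h1, h2]
      rfl

lemma pairwise_lt_set {r : List ℕ} {j v : ℕ} (hs : List.Pairwise (· < ·) r)
    (hj : j < r.length) (hlt : ∀ i, i < j → r.getD i 0 < v) (hle : v ≤ r.getD j 0) :
    List.Pairwise (· < ·) (r.set j v) := by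
  rw [List.pairwise_iff_getElem] at hs ⊢
  intro i1 i2 h1 h2 h12
  simp only [List.length_set] at h1 h2
  rw [List.getElem_set, List.getElem_set]
  rcases eq_or_ne j i1 with rfl | hne1
  · rw [if_pos rfl, if_neg (by omega)]
    calc v ≤ r.getD j 0 := hle
      _ = r[j] := List.getD_eq_getElem r 0 hj
      _ < r[i2] := hs j i2 hj h2 h12
  · rw [if_neg hne1]
    rcases eq_or_ne j i2 with rfl | hne2
    · rw [if_pos rfl]
      have := hlt i1 h12
      rwa [List.getD_eq_getElem r 0 h1] at this
    · rw [if_neg hne2]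
      exact hs i1 i2 h1 h2 h12






lemma findIdx_some_spec {r : List ℕ} {a j : ℕ}
    (h : r.findIdx? (fun x => decide (a ≤ x)) = some j) :
    j < r.length ∧ a ≤ r.getD j 0 ∧ ∀ i, i < j → r.getD i 0 < a := by
  rw [List.findIdx?_eq_some_iff_getElem] at h
  obtain ⟨hj, hp, hmin⟩ := h
  refine ⟨hj, ?_, ?_⟩
  · rw [List.getD_eq_getElem r 0 hj]; simpa using hp
  · intro i hi
    have hir : i < r.length := lt_trans hi hj
    have := hmin i hi
    rw [List.getD_eq_getElem r 0 hir]
    simp at this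
    omega

lemma findIdx_none_spec {r : List ℕ} {a : ℕ}
    (h : r.findIdx? (fun x => decide (a ≤ x)) = none) :
    ∀ x ∈ r, x < a := by
  rw [List.findIdx?_eq_none_iff] at h
  intro x hx
  have := h x hx
  simp at this
  omega

def vals : List (List ℕ) → ℕ → List ℕ
  | [], a => [a]
  | r :: rs, a =>
    match r.findIdx? (fun x => decide (a ≤ x)) with
    | none => [a]
    | some j => a :: vals rs (r.getD j 0)

@[simp] lemma vals_nil (a : ℕ) : vals [] a = [a] := rfl

lemma vals_cons_none {r : List ℕ} {rs : List (List ℕ)} {a : ℕ}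
    (h : r.findIdx? (fun x => decide (a ≤ x)) = none) : vals (r :: rs) a = [a] := by
  simp [vals, h]

lemma vals_cons_some {r : List ℕ} {rs : List (List ℕ)} {a j : ℕ}
    (h : r.findIdx? (fun x => decide (a ≤ x)) = some j) :
    vals (r :: rs) a = a :: vals rs (r.getD j 0) := by
  simp [vals, h]

@[simp] lemma ins_nil (a : ℕ) : ins [] a = ([[a]], [0]) := rfl

lemma ins_cons_none {r : List ℕ} {rs : List (List ℕ)} {a : ℕ}
    (h : r.findIdx? (fun x => decide (a ≤ x)) = none) :
    ins (r :: rs) a = ((r ++ [a]) :: rs, [r.length]) := by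
  simp [ins, h]

lemma ins_cons_some {r : List ℕ} {rs : List (List ℕ)} {a j : ℕ}
    (h : r.findIdx? (fun x => decide (a ≤ x)) = some j) :
    ins (r :: rs) a =
      ((r.set j a) :: (ins rs (r.getD j 0)).1, j :: (ins rs (r.getD j 0)).2) := by
  simp [ins, h]

lemma vals_pos (T : List (List ℕ)) (a : ℕ) : 0 < (vals T a).length := by
  cases T with
  | nil => simp
  | cons r rs =>
    rcases hf : r.findIdx? (fun x => decide (a ≤ x)) with _ | j
    · rw [vals_cons_none hf]; simp
    · rw [vals_cons_some hf]; simp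

lemma vals_getD_zero (T : List (List ℕ)) (a : ℕ) : (vals T a).getD 0 0 = a := by
  cases T with
  | nil => simp
  | cons r rs =>
    rcases hf : r.findIdx? (fun x => decide (a ≤ x)) with _ | j
    · rw [vals_cons_none hf]; simp
    · rw [vals_cons_some hf]; simp

lemma ins_snd_length (T : List (List ℕ)) (a : ℕ) :
    (ins T a).2.length = (vals T a).length := by
  induction T generalizing a with
  | nil => simp
  | cons r rs ih =>
    rcases hf : r.findIdx? (fun x => decide (a ≤ x)) with _ | j
    · rw [ins_cons_none hf, vals_cons_none hf]
      rfl
    · rw [ins_cons_some hf, vals_cons_some hf]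
      simp [ih]

lemma vals_length_le (T : List (List ℕ)) (a : ℕ) :
    (vals T a).length ≤ T.length + 1 := by
  induction T generalizing a with
  | nil => simp
  | cons r rs ih =>
    rcases hf : r.findIdx? (fun x => decide (a ≤ x)) with _ | j
    · rw [vals_cons_none hf]; simp
    · rw [vals_cons_some hf]
      simpa using ih _

lemma ins_fst_length (T : List (List ℕ)) (a : ℕ) :
    (ins T a).1.length = max T.length (vals T a).length := by
  induction T generalizing a with
  | nil => simp
  | cons r rs ih =>
    rcases hf : r.findIdx? (fun x => decide (a ≤ x)) with _ | j
    · rw [ins_cons_none hf, vals_cons_none hf]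
      simp
    · rw [ins_cons_some hf, vals_cons_some hf]
      simp only [List.length_cons, ih]
      omega

lemma vals_chain (T : List (List ℕ)) (a : ℕ) :
    ∀ t, t + 1 < (vals T a).length →
      (vals T a).getD t 0 ≤ (vals T a).getD (t + 1) 0 := by
  induction T generalizing a with
  | nil => simp
  | cons r rs ih =>
    rcases hf : r.findIdx? (fun x => decide (a ≤ x)) with _ | j
    · rw [vals_cons_none hf]; simp
    · rw [vals_cons_some hf]
      intro t ht
      cases t with
      | zero =>
        simp only [List.getD_cons_zero, List.getD_cons_succ]
        rw [vals_getD_zero]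
        exact (findIdx_some_spec hf).2.1
      | succ t =>
        simp only [List.getD_cons_succ]
        apply ih
        simpa using ht

lemma ins_row_set (T : List (List ℕ)) (a : ℕ) :
    ∀ t, t + 1 < (vals T a).length →
      ∃ j, j < (T.getD t []).length ∧
        (T.getD t []).getD j 0 = (vals T a).getD (t + 1) 0 ∧
        (∀ i, i < j → (T.getD t []).getD i 0 < (vals T a).getD t 0) ∧
        (vals T a).getD t 0 ≤ (T.getD t []).getD j 0 ∧
        (ins T a).1.getD t [] = (T.getD t []).set j ((vals T a).getD t 0) := by
  induction T generalizing a with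
  | nil => simp
  | cons r rs ih =>
    rcases hf : r.findIdx? (fun x => decide (a ≤ x)) with _ | j
    · rw [vals_cons_none hf]; simp
    · rw [vals_cons_some hf, ins_cons_some hf]
      intro t ht
      obtain ⟨hjl, hja, hjm⟩ := findIdx_some_spec hf
      cases t with
      | zero =>
        refine ⟨j, by simpa using hjl, ?_, ?_, ?_, ?_⟩
        · simp only [List.getD_cons_zero, List.getD_cons_succ]
          rw [vals_getD_zero]
        · simpa using hjm
        · simpa using hja
        · simp
      | succ t =>
        simp only [List.getD_cons_succ]
        apply ih
        simpa using ht

lemma ins_row_last (T : List (List ℕ)) (a : ℕ) :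
    (ins T a).1.getD ((vals T a).length - 1) [] =
      T.getD ((vals T a).length - 1) [] ++ [(vals T a).getD ((vals T a).length - 1) 0] ∧
    ∀ x ∈ T.getD ((vals T a).length - 1) [], x < (vals T a).getD ((vals T a).length - 1) 0 := by
  induction T generalizing a with
  | nil => simp
  | cons r rs ih =>
    rcases hf : r.findIdx? (fun x => decide (a ≤ x)) with _ | j
    · rw [vals_cons_none hf, ins_cons_none hf]
      simp only [List.length_cons]
      constructor
      · simp
      · simpa using findIdx_none_spec hf
    · rw [vals_cons_some hf, ins_cons_some hf]
      have hp := vals_pos rs (r.getD j 0)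
      have hl : (a :: vals rs (r.getD j 0)).length - 1 = ((vals rs (r.getD j 0)).length - 1) + 1 := by
        simp only [List.length_cons]; omega
      rw [hl]
      simp only [List.getD_cons_succ]
      exact ih _

lemma ins_row_after (T : List (List ℕ)) (a : ℕ) :
    ∀ t, (vals T a).length ≤ t → (ins T a).1.getD t [] = T.getD t [] := by
  induction T generalizing a with
  | nil =>
    intro t ht
    simp at ht ⊢
    match t, ht with
    | t + 1, _ => simp
  | cons r rs ih =>
    rcases hf : r.findIdx? (fun x => decide (a ≤ x)) with _ | j
    · rw [vals_cons_none hf, ins_cons_none hf]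
      intro t ht
      simp at ht
      match t, ht with
      | t + 1, _ => simp
    · rw [vals_cons_some hf, ins_cons_some hf]
      intro t ht
      simp at ht
      match t, ht with
      | t + 1, ht => simpa using ih _ t (by omega)

lemma vals_mem (T : List (List ℕ)) (a : ℕ) :
    ∀ y ∈ vals T a, y = a ∨ ∃ r ∈ T, y ∈ r := by
  induction T generalizing a with
  | nil => simp
  | cons r rs ih =>
    rcases hf : r.findIdx? (fun x => decide (a ≤ x)) with _ | j
    · rw [vals_cons_none hf]; simp
    · rw [vals_cons_some hf]
      intro y hy
      rcases List.mem_cons.1 hy with rfl | hy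
      · exact Or.inl rfl
      · rcases ih _ y hy with rfl | ⟨r', hr', hy'⟩
        · right
          refine ⟨r, List.mem_cons_self, ?_⟩
          have hj := (findIdx_some_spec hf).1
          rw [List.getD_eq_getElem r 0 hj]
          exact List.getElem_mem _
        · exact Or.inr ⟨r', List.mem_cons_of_mem _ hr', hy'⟩

lemma ins_mem (T : List (List ℕ)) (a : ℕ) :
    ∀ r' ∈ (ins T a).1, ∀ y ∈ r', y = a ∨ ∃ r ∈ T, y ∈ r := by
  induction T generalizing a with
  | nil => simp
  | cons r rs ih =>
    rcases hf : r.findIdx? (fun x => decide (a ≤ x)) with _ | j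
    · rw [ins_cons_none hf]
      intro r' hr' y hy
      rcases List.mem_cons.1 hr' with rfl | hr'
      · rcases List.mem_append.1 hy with hy | hy
        · exact Or.inr ⟨r, List.mem_cons_self, hy⟩
        · simp at hy; exact Or.inl hy
      · exact Or.inr ⟨r', List.mem_cons_of_mem _ hr', hy⟩
    · rw [ins_cons_some hf]
      intro r' hr' y hy
      have hj := (findIdx_some_spec hf).1
      have hxm : r.getD j 0 ∈ r := by
        rw [List.getD_eq_getElem r 0 hj]; exact List.getElem_mem _
      rcases List.mem_cons.1 hr' with rfl | hr'
      · rcases List.mem_or_eq_of_mem_set hy with hy | rfl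
        · exact Or.inr ⟨r, List.mem_cons_self, hy⟩
        · exact Or.inl rfl
      · rcases ih _ r' hr' y hy with rfl | ⟨r'', hr'', hy'⟩
        · exact Or.inr ⟨r, List.mem_cons_self, hxm⟩
        · exact Or.inr ⟨r'', List.mem_cons_of_mem _ hr'', hy'⟩

lemma ins_sorted {T : List (List ℕ)} (hT : ∀ r ∈ T, List.Pairwise (· < ·) r) (a : ℕ) :
    ∀ r' ∈ (ins T a).1, List.Pairwise (· < ·) r' := by
  induction T generalizing a with
  | nil => simp
  | cons r rs ih =>
    have hr := hT r (List.mem_cons_self)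
    have hrs : ∀ r ∈ rs, List.Pairwise (· < ·) r := fun r hrm => hT r (List.mem_cons_of_mem _ hrm)
    rcases hf : r.findIdx? (fun x => decide (a ≤ x)) with _ | j
    · rw [ins_cons_none hf]
      intro r' hr'
      rcases List.mem_cons.1 hr' with rfl | hr'
      · rw [List.pairwise_append]
        refine ⟨hr, by simp, ?_⟩
        intro x hx y hy
        simp at hy
        subst hy
        exact findIdx_none_spec hf x hx
      · exact hrs r' hr'
    · rw [ins_cons_some hf]
      intro r' hr'
      obtain ⟨hjl, hja, hjm⟩ := findIdx_some_spec hf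
      rcases List.mem_cons.1 hr' with rfl | hr'
      · exact pairwise_lt_set hr hjl hjm hja
      · exact ih hrs _ r' hr'

lemma ins2 {T : List (List ℕ)} (hT : ∀ r ∈ T, List.Pairwise (· < ·) r) {a a' : ℕ}
    (h : a' ≤ a) : (ins T a).2.length < (ins (ins T a).1 a').2.length := by
  induction T generalizing a a' with
  | nil =>
    simp only [ins_nil]
    have hf : [a].findIdx? (fun x => decide (a' ≤ x)) = some 0 := by
      simp [List.findIdx?_cons, h]
    show [0].length < (ins [[a]] a').2.length
    rw [ins_cons_some hf]
    simp
  | cons r rs ih =>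
    have hr := hT r (List.mem_cons_self)
    have hrs : ∀ r ∈ rs, List.Pairwise (· < ·) r := fun r hrm => hT r (List.mem_cons_of_mem _ hrm)
    rcases hf : r.findIdx? (fun x => decide (a ≤ x)) with _ | j
    · rw [ins_cons_none hf]
      have hne : (r ++ [a]).findIdx? (fun x => decide (a' ≤ x)) ≠ none := by
        intro hc
        have := List.findIdx?_eq_none_iff.1 hc a (by simp)
        simp at this
        omega
      rcases hf2 : (r ++ [a]).findIdx? (fun x => decide (a' ≤ x)) with _ | j'
      · exact absurd hf2 hne
      · rw [ins_cons_some hf2]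
        have h1 := vals_pos rs ((r ++ [a]).getD j' 0)
        have h2 := ins_snd_length rs ((r ++ [a]).getD j' 0)
        simp only [List.length_cons, List.length_nil, List.length_singleton]
        omega
    · rw [ins_cons_some hf]
      obtain ⟨hjl, hja, hjm⟩ := findIdx_some_spec hf
      have hsj : (r.set j a).getD j 0 = a := by
        rw [List.getD_eq_getElem _ 0 (by simpa using hjl), List.getElem_set]
        simp
      have hne : (r.set j a).findIdx? (fun x => decide (a' ≤ x)) ≠ none := by
        intro hc
        have hm : a ∈ r.set j a := by
          have hjj : j < (r.set j a).length := by simpa using hjl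
          have he : (r.set j a)[j] = a := by rw [List.getElem_set]; simp
          have hmm := List.getElem_mem hjj
          rwa [he] at hmm
        have := List.findIdx?_eq_none_iff.1 hc a hm
        simp at this
        omega
      rcases hf2 : (r.set j a).findIdx? (fun x => decide (a' ≤ x)) with _ | j'
      · exact absurd hf2 hne
      · obtain ⟨hjl2, hja2, hjm2⟩ := findIdx_some_spec hf2
        have hj'j : j' ≤ j := by
          by_contra hc
          push_neg at hc
          have := hjm2 j hc
          rw [hsj] at this
          omega
        have hx' : (r.set j a).getD j' 0 ≤ r.getD j 0 := by
          rcases eq_or_lt_of_le hj'j with rfl | hlt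
          · rw [hsj]; exact hja
          · have hj'r : j' < r.length := lt_trans hlt hjl
            rw [List.getD_eq_getElem _ 0 (by simpa using hj'r), List.getElem_set,
              if_neg (by omega)]
            rw [List.getD_eq_getElem _ 0 hjl]
            exact Nat.le_of_lt (List.pairwise_iff_getElem.1 hr j' j hj'r hjl hlt)
        rw [ins_cons_some hf2]
        have := ih hrs hx'
        simp only [List.length_cons]
        omega


lemma getD_mem {L : List (List ℕ)} {i : ℕ} (h : i < L.length) : L.getD i [] ∈ L := by
  rw [List.getD_eq_getElem _ _ h]
  exact List.getElem_mem h

lemma getD_mem' {α : Type} (d : α) {L : List α} {i : ℕ} (h : i < L.length) :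
    L.getD i d ∈ L := by
  rw [List.getD_eq_getElem _ _ h]
  exact List.getElem_mem h

lemma below_getD (P : List (List ℕ)) (b : ℕ) (i : ℕ) :
    (below P b).getD i [] = (P.getD i []).filter (fun x => decide (x < b)) := by
  rcases Nat.lt_or_ge i P.length with h | h
  · unfold below
    rw [List.getD_eq_getElem _ _ (by simpa using h), List.getElem_map,
      List.getD_eq_getElem _ _ h]
  · rw [List.getD_eq_default _ _ (by simpa [below] using h), List.getD_eq_default _ _ h]
    rfl

def cntSS (P Q : List (List ℕ)) : Prop :=
  ∀ i τ, i + 1 < P.length →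
    cnt (P.getD (i + 1) []) τ + cnt (Q.getD i []) τ ≤
      cnt (P.getD i []) τ + cnt (Q.getD (i + 1) []) τ

def Inv (P Q : List (List ℕ)) (l : List (ℕ × ℕ)) : Prop :=
  SameShape P Q ∧ RowStrictT P ∧ RowStrictT Q ∧ PosEntries P ∧ PosEntries Q ∧
    (∀ r ∈ P, r ≠ []) ∧ cntSS P Q ∧ NegativeNB P Q ∧
    (∀ p ∈ l, ∀ r ∈ Q, ∀ x ∈ r, p.2 ≤ x) ∧
    (∀ a b, l.head? = some (a, b) → ∀ i, i < Q.length → b ∈ Q.getD i [] →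
      i + 1 < (ins (below P b) a).2.length)

lemma step {P Q : List (List ℕ)} {a b : ℕ} {rest : List (ℕ × ℕ)}
    (hInv : Inv P Q ((a, b) :: rest)) (ha : 0 < a) (hab : a < b)
    (hrest : ∀ p ∈ rest, p.2 < b ∨ (b = p.2 ∧ p.1 ≤ a)) :
    Inv (BRSKstep (P, Q) (a, b)).1 (BRSKstep (P, Q) (a, b)).2 rest := by
  obtain ⟨hshape, hPstrict, hQstrict, hPpos, hQpos, hPne, hcnt, hneg, hQge', hsafe⟩ := hInv
  have hn : Q.length = P.length := hshape.1.symm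
  -- length of rows
  have hrlen : ∀ i, (P.getD i []).length = (Q.getD i []).length := hshape.2
  have hQge : ∀ i, ∀ x ∈ Q.getD i [], b ≤ x := by
    intro i x hx
    rcases Nat.lt_or_ge i Q.length with h | h
    · exact hQge' (a, b) (List.mem_cons_self) _ (getD_mem h) x hx
    · rw [List.getD_eq_default _ _ h] at hx; simp at hx
  have hProwS : ∀ i, List.Pairwise (· < ·) (P.getD i []) := by
    intro i
    rcases Nat.lt_or_ge i P.length with h | h
    · exact List.isChain_iff_pairwise.1 (hPstrict _ (getD_mem h))
    · rw [List.getD_eq_default _ _ h]; simp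
  have hQrowS : ∀ i, List.Pairwise (· < ·) (Q.getD i []) := by
    intro i
    rcases Nat.lt_or_ge i Q.length with h | h
    · exact List.isChain_iff_pairwise.1 (hQstrict _ (getD_mem h))
    · rw [List.getD_eq_default _ _ h]; simp
  have hProwW : ∀ i, List.Pairwise (· ≤ ·) (P.getD i []) :=
    fun i => (hProwS i).imp Nat.le_of_lt
  have hPposD : ∀ i, ∀ x ∈ P.getD i [], 0 < x := by
    intro i x hx
    rcases Nat.lt_or_ge i P.length with h | h
    · exact hPpos _ (getD_mem h) x hx
    · rw [List.getD_eq_default _ _ h] at hx; simp at hx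
  set T : List (List ℕ) := below P b with hT
  set v : List ℕ := vals T a with hv
  set k : ℕ := v.length - 1 with hkdef
  have hvpos : 0 < v.length := vals_pos T a
  have hvlen : v.length = k + 1 := by omega
  have hTlen : T.length = P.length := by simp [hT, below]
  have hTrow : ∀ i, T.getD i [] = (P.getD i []).filter (fun x => decide (x < b)) := by
    intro i; rw [hT]; exact below_getD P b i
  have hTrowS : ∀ i, List.Pairwise (· < ·) (T.getD i []) := by
    intro i; rw [hTrow]; exact (hProwS i).filter _
  have hTrowW : ∀ i, List.Pairwise (· ≤ ·) (T.getD i []) :=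
    fun i => (hTrowS i).imp Nat.le_of_lt
  have hTrows : ∀ r ∈ T, List.Pairwise (· < ·) r := by
    intro r hr
    obtain ⟨i, hi, rfl⟩ := List.getElem_of_mem hr
    rw [← List.getD_eq_getElem _ [] hi]
    exact hTrowS i
  have hTmem : ∀ i, ∀ x ∈ T.getD i [], x < b ∧ 0 < x := by
    intro i x hx
    rw [hTrow i] at hx
    have h1 := List.of_mem_filter hx
    have h2 := List.mem_of_mem_filter hx
    simp at h1
    exact ⟨h1, hPposD i x h2⟩
  have hkT : k ≤ P.length := by
    have := vals_length_le T a
    rw [← hv, hTlen] at this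
    omega
  have hvmem : ∀ t, t < v.length → 0 < v.getD t 0 ∧ v.getD t 0 < b := by
    intro t ht
    have hmem : v.getD t 0 ∈ v := by
      rw [List.getD_eq_getElem _ _ ht]; exact List.getElem_mem ht
    rcases vals_mem T a _ hmem with h | ⟨r, hr, hxr⟩
    · rw [h]; exact ⟨ha, hab⟩
    · obtain ⟨i, hi, rfl⟩ := List.getElem_of_mem hr
      rw [← List.getD_eq_getElem _ [] hi] at hxr
      have := hTmem i _ hxr
      exact ⟨this.2, this.1⟩
  have hsplit : ∀ i, T.getD i [] ++ (P.getD i []).filter (fun x => decide (b ≤ x)) = P.getD i [] := by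
    intro i
    rw [hTrow i]
    exact filter_lt_append_filter_ge b (hProwW i)
  have hIlen : (ins T a).1.length = max P.length (k + 1) := by
    rw [ins_fst_length, hTlen, ← hv, hvlen]
  have hI2len : (ins T a).2.length = k + 1 := by
    rw [ins_snd_length, ← hv, hvlen]
  have hP'1 : (BRSKstep (P, Q) (a, b)).1 = (bins P b a).1 := rfl
  have hbins2 : (bins P b a).2 = (ins T a).2 := rfl
  set P' := (BRSKstep (P, Q) (a, b)).1 with hP'def
  set Q' := (BRSKstep (P, Q) (a, b)).2 with hQ'def0
  have hP'len : P'.length = max P.length (k + 1) := by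
    show (List.map _ (List.range (ins (below P b) a).1.length)).length = _
    rw [List.length_map, List.length_range, ← hT, hIlen]
  have hProw' : ∀ i, i < max P.length (k + 1) →
      P'.getD i [] = (ins T a).1.getD i [] ++ (P.getD i []).filter (fun x => decide (b ≤ x)) := by
    intro i hi
    show (List.map _ (List.range (ins (below P b) a).1.length)).getD i [] = _
    have hi' : i < (List.map (fun i => (ins (below P b) a).1.getD i [] ++
        (P.getD i []).filter (fun x => decide (b ≤ x))) (List.range (ins (below P b) a).1.length)).length := by
      rw [List.length_map, List.length_range, ← hT, hIlen]; exact hi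
    rw [List.getD_eq_getElem _ _ hi', List.getElem_map, List.getElem_range]
  have hProw'_ge : ∀ i, max P.length (k + 1) ≤ i → P'.getD i [] = [] := by
    intro i hi
    apply List.getD_eq_default
    rw [hP'len]; exact hi
  have hQ'def : Q' = if k < Q.length then Q.set k (b :: Q.getD k []) else Q ++ [[b]] := by
    rw [hQ'def0]
    show (if (bins P b a).2.length - 1 < Q.length then _ else _) = _
    rw [hbins2, hI2len]
    simp
  have hQ'len : Q'.length = max P.length (k + 1) := by
    rw [hQ'def]
    split_ifs with h
    · rw [List.length_set, hn]
      omega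
    · rw [List.length_append, hn]
      simp at h
      rw [hn] at h
      simp
      omega
  have hQ'k : Q'.getD k [] = b :: Q.getD k [] := by
    rw [hQ'def]
    split_ifs with h
    · rw [List.getD_eq_getElem _ _ (by rw [List.length_set]; exact h), List.getElem_set,
        if_pos rfl]
    · push_neg at h
      have hkQ : k = Q.length := by omega
      rw [hkQ, List.getD_append_right _ _ _ _ (le_refl _), Nat.sub_self,
        List.getD_eq_default _ _ (le_refl _)]
      rfl
  have hQ'ne : ∀ i, i ≠ k → Q'.getD i [] = Q.getD i [] := by
    intro i hik
    rw [hQ'def]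
    split_ifs with h
    · rcases Nat.lt_or_ge i (Q.set k (b :: Q.getD k [])).length with h2 | h2
      · rw [List.getD_eq_getElem _ _ h2, List.getElem_set, if_neg (by omega)]
        rw [List.length_set] at h2
        rw [List.getD_eq_getElem _ _ h2]
      · rw [List.length_set] at h2
        rw [List.getD_eq_default _ _ (by rw [List.length_set]; exact h2),
          List.getD_eq_default _ _ h2]
    · rcases Nat.lt_or_ge i Q.length with h2 | h2
      · rw [List.getD_append _ _ _ _ h2]
      · rcases Nat.lt_or_ge i (Q ++ [[b]]).length with h3 | h3
        · rw [List.length_append] at h3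
          simp at h3
          have hik2 : i = Q.length := by omega
          exfalso
          apply hik
          rw [hik2, hn]
          push_neg at h
          rw [hn] at h
          omega
        · rw [List.getD_eq_default _ _ h3, List.getD_eq_default _ _ h2]
  -- row data from ins
  have hrowset : ∀ t, t < k → ∃ j, j < (T.getD t []).length ∧
      (T.getD t []).getD j 0 = v.getD (t + 1) 0 ∧
      (∀ i, i < j → (T.getD t []).getD i 0 < v.getD t 0) ∧
      v.getD t 0 ≤ (T.getD t []).getD j 0 ∧
      (ins T a).1.getD t [] = (T.getD t []).set j (v.getD t 0) := by
    intro t ht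
    exact ins_row_set T a t (by show t + 1 < v.length; omega)
  have hrowlast1 : (ins T a).1.getD k [] = T.getD k [] ++ [v.getD k 0] :=
    (ins_row_last T a).1
  have hrowlast2 : ∀ x ∈ T.getD k [], x < v.getD k 0 :=
    (ins_row_last T a).2
  have hrowafter : ∀ t, k < t → (ins T a).1.getD t [] = T.getD t [] := by
    intro t ht
    apply ins_row_after T a t
    show v.length ≤ t
    omega
  have hchain : ∀ t, t < k → v.getD t 0 ≤ v.getD (t + 1) 0 := by
    intro t ht
    exact vals_chain T a t (by show t + 1 < v.length; omega)
  -- count helpers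
  have hQ0 : ∀ i τ, τ < b → cnt (Q.getD i []) τ = 0 := by
    intro i τ hτ
    apply cnt_eq_zero
    intro x hx
    exact lt_of_lt_of_le hτ (hQge i x hx)
  have hEcnt : ∀ i τ, τ < b → cnt ((P.getD i []).filter (fun x => decide (b ≤ x))) τ = 0 := by
    intro i τ hτ
    apply cnt_eq_zero
    intro x hx
    have := List.of_mem_filter hx
    simp at this
    omega
  have hPT : ∀ i τ, τ < b → cnt (P.getD i []) τ = cnt (T.getD i []) τ := by
    intro i τ hτ
    conv_lhs => rw [← hsplit i]
    rw [cnt_append, hEcnt i τ hτ]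
    omega
  have hTP : ∀ i τ, cnt (T.getD i []) τ ≤ cnt (P.getD i []) τ := by
    intro i τ
    conv_rhs => rw [← hsplit i]
    rw [cnt_append]
    omega
  have hQP : ∀ i τ, cnt (Q.getD i []) τ ≤ cnt (P.getD i []) τ := by
    intro i τ
    rcases Nat.lt_or_ge i P.length with h | h
    · apply le_cnt
      · rw [hrlen i]
        exact cnt_le_length _ _
      · intro jj hjj
        have hjQ : jj < cnt (Q.getD i []) τ := hjj
        have h1 : (Q.getD i []).getD jj 0 ≤ τ :=
          getD_le_of_lt_cnt ((hQrowS i).imp Nat.le_of_lt) hjQ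
        have hjjl : jj < (P.getD i []).length := by
          rw [hrlen i]
          exact lt_of_lt_of_le hjQ (cnt_le_length _ _)
        calc (P.getD i []).getD jj 0 ≤ (Q.getD i []).getD jj 0 :=
              Nat.le_of_lt (hneg i h jj hjjl)
          _ ≤ τ := h1
    · rw [List.getD_eq_default _ _ (by omega : Q.length ≤ i)]
      simp [cnt_nil]
  -- count change formulas
  have hc_lt : ∀ t, t < k → ∀ τ, cnt (P'.getD t []) τ =
      cnt (P.getD t []) τ + (if v.getD t 0 ≤ τ ∧ τ < v.getD (t + 1) 0 then 1 else 0) := by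
    intro t ht τ
    obtain ⟨j, hjl, hjv, hjlt, hjle, hrow⟩ := hrowset t ht
    rw [hProw' t (by omega), hrow, cnt_append, cnt_set hjl hjle, hjv]
    conv_rhs => rw [← hsplit t]
    rw [cnt_append]
    ring
  have hc_k : ∀ τ, cnt (P'.getD k []) τ =
      cnt (P.getD k []) τ + (if v.getD k 0 ≤ τ then 1 else 0) := by
    intro τ
    rw [hProw' k (by omega), hrowlast1, cnt_append, cnt_append]
    conv_rhs => rw [← hsplit k]
    rw [cnt_append, cnt_cons, cnt_nil]
    ring
  have hrow_gt : ∀ t, k < t → P'.getD t [] = P.getD t [] := by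
    intro t ht
    rcases Nat.lt_or_ge t (max P.length (k + 1)) with h | h
    · rw [hProw' t h, hrowafter t ht, hsplit t]
    · rw [hProw'_ge t h]
      rw [List.getD_eq_default _ _ (by omega : P.length ≤ t)]
  have hlen_lt : ∀ t, t < k → (P'.getD t []).length = (P.getD t []).length := by
    intro t ht
    obtain ⟨j, hjl, hjv, hjlt, hjle, hrow⟩ := hrowset t ht
    rw [hProw' t (by omega), hrow]
    conv_rhs => rw [← hsplit t]
    rw [List.length_append, List.length_append, List.length_set]
  have hlen_k : (P'.getD k []).length = (P.getD k []).length + 1 := by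
    rw [hProw' k (by omega), hrowlast1]
    conv_rhs => rw [← hsplit k]
    rw [List.length_append, List.length_append, List.length_append]
    simp
    ring
  have hInsLt : ∀ i, ∀ x ∈ (ins T a).1.getD i [], x < b ∧ 0 < x := by
    intro i x hx
    rcases Nat.lt_or_ge i (ins T a).1.length with h2 | h2
    · rcases ins_mem T a _ (getD_mem h2) x hx with rfl | ⟨r, hrT, hxr⟩
      · exact ⟨hab, ha⟩
      · obtain ⟨i2, hi2, rfl⟩ := List.getElem_of_mem hrT
        rw [← List.getD_eq_getElem _ [] hi2] at hxr
        exact ⟨(hTmem i2 x hxr).1, (hTmem i2 x hxr).2⟩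
    · rw [List.getD_eq_default _ _ h2] at hx
      simp at hx
  have hbelow' : below P' b = (ins T a).1 := by
    have hblen : (below P' b).length = P'.length := by simp [below]
    apply List.ext_getElem
    · rw [hblen, hP'len, hIlen]
    · intro i h1 h2
      have hiL : i < max P.length (k + 1) := by
        rw [hblen, hP'len] at h1
        exact h1
      rw [← List.getD_eq_getElem _ [] h1, ← List.getD_eq_getElem _ [] h2]
      rw [below_getD, hProw' i hiL, List.filter_append]
      have hf1 : ((ins T a).1.getD i []).filter (fun x => decide (x < b)) =
          (ins T a).1.getD i [] := by
        rw [List.filter_eq_self]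
        intro x hx
        simp only [decide_eq_true_eq]
        exact (hInsLt i x hx).1
      have hf2 : (((P.getD i []).filter (fun x => decide (b ≤ x))).filter
          (fun x => decide (x < b))) = [] := by
        rw [List.filter_eq_nil_iff]
        intro x hx
        have := List.of_mem_filter hx
        simp at this ⊢
        omega
      rw [hf1, hf2, List.append_nil]
  have hQge2 : ∀ p ∈ rest, ∀ i, ∀ x ∈ Q.getD i [], p.2 ≤ x := by
    intro p hp i x hx
    rcases Nat.lt_or_ge i Q.length with h | h
    · exact hQge' p (List.mem_cons_of_mem _ hp) _ (getD_mem h) x hx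
    · rw [List.getD_eq_default _ _ h] at hx
      simp at hx
  refine ⟨?_, ?_, ?_, ?_, ?_, ?_, ?_, ?_, ?_, ?_⟩
  · -- SameShape
    constructor
    · rw [hP'len, hQ'len]
    · intro i
      rcases lt_trichotomy i k with h | rfl | h
      · rw [hlen_lt i h, hQ'ne i (by omega), hrlen i]
      · rw [hlen_k, hQ'k]
        rw [List.length_cons, hrlen k]
      · rw [hrow_gt i h, hQ'ne i (by omega), hrlen i]
  · -- RowStrictT P'
    intro r hr
    obtain ⟨i, hi, rfl⟩ := List.getElem_of_mem hr
    rw [← List.getD_eq_getElem _ [] hi]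
    rw [hP'len] at hi
    rw [hProw' i hi, List.Chain', List.isChain_iff_pairwise, List.pairwise_append]
    refine ⟨?_, ?_, ?_⟩
    · rcases Nat.lt_or_ge i (ins T a).1.length with h2 | h2
      · exact ins_sorted hTrows a _ (getD_mem h2)
      · rw [List.getD_eq_default _ _ h2]
        simp
    · exact (hProwS i).filter _
    · intro x hx y hy
      have hxb : x < b := (hInsLt i x hx).1
      have hyb : b ≤ y := by
        have := List.of_mem_filter hy
        simpa using this
      omega
  · -- RowStrictT Q'
    intro r hr
    obtain ⟨i, hi, rfl⟩ := List.getElem_of_mem hr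
    rw [← List.getD_eq_getElem _ [] hi]
    rw [List.Chain', List.isChain_iff_pairwise]
    rcases eq_or_ne i k with rfl | hik
    · rw [hQ'k, List.pairwise_cons]
      constructor
      · intro x hx
        have hbx := hQge k x hx
        rcases eq_or_lt_of_le hbx with heq | h
        · exfalso
          have hkQ : k < Q.length := by
            by_contra hc
            push_neg at hc
            rw [List.getD_eq_default _ _ hc] at hx
            simp at hx
          rw [← heq] at hx
          have := hsafe a b rfl k hkQ hx
          rw [hI2len] at this
          omega
        · exact h
      · exact hQrowS k
    · rw [hQ'ne i hik]
      exact hQrowS i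
  · -- PosEntries P'
    intro r hr x hx
    obtain ⟨i, hi, rfl⟩ := List.getElem_of_mem hr
    rw [← List.getD_eq_getElem _ [] hi] at hx
    rw [hP'len] at hi
    rw [hProw' i hi] at hx
    rcases List.mem_append.1 hx with hx | hx
    · exact (hInsLt i x hx).2
    · exact hPposD i x (List.mem_of_mem_filter hx)
  · -- PosEntries Q'
    intro r hr x hx
    obtain ⟨i, hi, rfl⟩ := List.getElem_of_mem hr
    rw [← List.getD_eq_getElem _ [] hi] at hx
    have hgen : ∀ y ∈ Q.getD i [], 0 < y := by
      intro y hy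
      rcases Nat.lt_or_ge i Q.length with h | h
      · exact hQpos _ (getD_mem h) y hy
      · rw [List.getD_eq_default _ _ h] at hy
        simp at hy
    rcases eq_or_ne i k with rfl | hik
    · rw [hQ'k] at hx
      rcases List.mem_cons.1 hx with rfl | hx
      · omega
      · exact hgen x hx
    · rw [hQ'ne i hik] at hx
      exact hgen x hx
  · -- nonempty rows
    intro r hr
    obtain ⟨i, hi, rfl⟩ := List.getElem_of_mem hr
    rw [← List.getD_eq_getElem _ [] hi]
    rw [hP'len] at hi
    intro hcon
    have hlen0 : (P'.getD i []).length = 0 := by rw [hcon]; rfl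
    rcases lt_trichotomy i k with h | rfl | h
    · rw [hlen_lt i h] at hlen0
      have hiP : i < P.length := by omega
      exact hPne _ (getD_mem hiP) (List.length_eq_zero_iff.1 hlen0)
    · rw [hlen_k] at hlen0
      omega
    · rw [hrow_gt i h] at hlen0
      have hiP : i < P.length := by omega
      exact hPne _ (getD_mem hiP) (List.length_eq_zero_iff.1 hlen0)
  · -- cntSS
    intro i τ hi1
    rw [hP'len] at hi1
    rcases Nat.lt_or_ge (i + 1) k with hA | hge
    · -- Case A : i + 1 < k
      have hQi : Q'.getD i [] = Q.getD i [] := hQ'ne i (by omega)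
      have hQi1 : Q'.getD (i + 1) [] = Q.getD (i + 1) [] := hQ'ne (i + 1) (by omega)
      rw [hQi, hQi1, hc_lt (i + 1) hA τ, hc_lt i (by omega) τ]
      have hold := hcnt i τ (by omega)
      by_cases hτ : v.getD (i + 1) 0 ≤ τ ∧ τ < v.getD (i + 1 + 1) 0
      · obtain ⟨hτ1, hτ2⟩ := hτ
        obtain ⟨j1, hj1l, hj1v, hj1lt, hj1le, hrow1⟩ := hrowset i (by omega)
        obtain ⟨j2, hj2l, hj2v, hj2lt, hj2le, hrow2⟩ := hrowset (i + 1) hA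
        have hvb2 : v.getD (i + 1 + 1) 0 < b := (hvmem (i + 1 + 1) (by omega)).2
        have hτb : τ < b := by omega
        have hvpos1 : 0 < v.getD (i + 1) 0 := (hvmem (i + 1) (by omega)).1
        have hvb1 : v.getD (i + 1) 0 < b := (hvmem (i + 1) (by omega)).2
        have e1 : cnt (P.getD (i + 1) []) τ ≤ j2 := by
          rw [hPT (i + 1) τ hτb]
          apply cnt_le_sorted (hTrowW (i + 1)) hj2l
          omega
        have e2 : j2 ≤ cnt (T.getD (i + 1) []) (v.getD (i + 1) 0 - 1) := by
          apply le_cnt (Nat.le_of_lt hj2l)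
          intro jj hjj
          have := hj2lt jj hjj
          omega
        have e3 : cnt (T.getD i []) (v.getD (i + 1) 0 - 1) ≤ j1 := by
          apply cnt_le_sorted (hTrowW i) hj1l
          omega
        have hold' := hcnt i (v.getD (i + 1) 0 - 1) (by omega)
        rw [hQ0 i _ (by omega), hQ0 (i + 1) _ (by omega), hPT i _ (by omega),
          hPT (i + 1) _ (by omega)] at hold'
        have e4 : j1 + 1 ≤ cnt (T.getD i []) τ := by
          apply le_cnt (by omega)
          intro jj hjj
          rcases Nat.lt_or_ge jj j1 with h | h
          · have h5 := hj1lt jj h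
            have h6 := hchain i (by omega)
            omega
          · have hjeq : jj = j1 := by omega
            subst hjeq
            omega
        have e5 := hTP i τ
        rw [hQ0 i τ hτb, hQ0 (i + 1) τ hτb]
        rw [if_pos ⟨hτ1, hτ2⟩, if_neg (by omega)]
        omega
      · rw [if_neg hτ]
        split_ifs <;> omega
    · rcases eq_or_lt_of_le hge with hB | hgt
      · -- Case B : k = i + 1
        have hB' : i + 1 = k := hB.symm
        have hQi : Q'.getD i [] = Q.getD i [] := hQ'ne i (by omega)
        rw [show i + 1 = k from hB', hc_k τ, hc_lt i (by omega) τ, hQ'k, cnt_cons, hQi]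
        have hvkb : v.getD k 0 < b := (hvmem k (by omega)).2
        have hvkpos : 0 < v.getD k 0 := (hvmem k (by omega)).1
        have hvk : v.getD (i + 1) 0 = v.getD k 0 := by rw [hB']
        obtain ⟨j1, hj1l, hj1v, hj1lt, hj1le, hrow1⟩ := hrowset i (by omega)
        rcases Nat.lt_or_ge τ (v.getD k 0) with hs1 | hs1
        · rw [if_neg (by omega)]
          rcases Nat.lt_or_ge k P.length with hkP | hkP
          · have hold := hcnt i τ (by omega)
            rw [show i + 1 = k from hB'] at hold
            split_ifs <;> omega
          · have hPk : P.getD k [] = [] := List.getD_eq_default _ _ (by omega)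
            have hQk : Q.getD k [] = [] := List.getD_eq_default _ _ (by omega)
            rw [hPk, hQk]
            have := hQP i τ
            simp only [cnt_nil]
            split_ifs <;> omega
        · rcases Nat.lt_or_ge τ b with hs2 | hs3
          · rw [hQ0 i τ hs2, hQ0 k τ hs2, if_pos hs1, if_neg (by omega), if_neg (by omega)]
            have e4 : j1 + 1 ≤ cnt (T.getD i []) τ := by
              apply le_cnt (by omega)
              intro jj hjj
              rcases Nat.lt_or_ge jj j1 with h | h
              · have h5 := hj1lt jj h
                have h6 := hchain i (by omega)
                omega
              · have hjeq : jj = j1 := by omega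
                subst hjeq
                omega
            have e5 := hTP i τ
            have eA : cnt (P.getD k []) τ ≤ (T.getD k []).length := by
              rw [hPT k τ hs2]
              exact cnt_le_length _ _
            rcases Nat.lt_or_ge k P.length with hkP | hkP
            · have eB : (T.getD k []).length ≤ cnt (T.getD k []) (v.getD k 0 - 1) := by
                apply le_cnt (le_refl _)
                intro jj hjj
                have hm := getD_mem' 0 hjj
                have := hrowlast2 _ hm
                omega
              have hold' := hcnt i (v.getD k 0 - 1) (by omega)
              rw [show i + 1 = k from hB'] at hold'
              rw [hQ0 i _ (by omega), hQ0 k _ (by omega), hPT i _ (by omega),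
                hPT k _ (by omega)] at hold'
              have eC : cnt (T.getD i []) (v.getD k 0 - 1) ≤ j1 := by
                apply cnt_le_sorted (hTrowW i) hj1l
                omega
              omega
            · have hPk : P.getD k [] = [] := List.getD_eq_default _ _ (by omega)
              rw [hPk]
              simp only [cnt_nil]
              omega
          · rw [if_pos (by omega : v.getD k 0 ≤ τ), if_pos hs3]
            rcases Nat.lt_or_ge k P.length with hkP | hkP
            · have hold := hcnt i τ (by omega)
              rw [show i + 1 = k from hB'] at hold
              split_ifs <;> omega
            · have hPk : P.getD k [] = [] := List.getD_eq_default _ _ (by omega)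
              have hQk : Q.getD k [] = [] := List.getD_eq_default _ _ (by omega)
              rw [hPk, hQk]
              have := hQP i τ
              simp only [cnt_nil]
              split_ifs <;> omega
      · rcases eq_or_lt_of_le (by omega : k ≤ i) with hC | hD
        · -- Case C : k = i
          rw [← hC] at hi1 ⊢
          have hkP : k + 1 < P.length := by omega
          rw [hrow_gt (k + 1) (by omega), hc_k τ, hQ'k, hQ'ne (k + 1) (by omega), cnt_cons]
          have hold := hcnt k τ (by omega)
          have hvkb : v.getD k 0 < b := (hvmem k (by omega)).2
          split_ifs <;> omega
        · -- Case D : k < i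
          have hiP : i + 1 < P.length := by omega
          rw [hrow_gt i (by omega), hrow_gt (i + 1) (by omega), hQ'ne i (by omega),
            hQ'ne (i + 1) (by omega)]
          exact hcnt i τ hiP
  · -- NegativeNB
    intro i hi jj hjj
    rw [hP'len] at hi
    rcases lt_trichotomy i k with h | heqk | h
    · have hQi : Q'.getD i [] = Q.getD i [] := hQ'ne i (by omega)
      rw [hQi]
      obtain ⟨j, hjl, hjv, hjlt, hjle, hrow⟩ := hrowset i h
      have hP'row : P'.getD i [] = (T.getD i []).set j (v.getD i 0) ++
          (P.getD i []).filter (fun x => decide (b ≤ x)) := by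
        rw [hProw' i (by omega), hrow]
      have hle : (P'.getD i []).getD jj 0 ≤ (P.getD i []).getD jj 0 := by
        rw [hP'row]
        conv_rhs => rw [← hsplit i]
        rcases Nat.lt_or_ge jj (T.getD i []).length with h2 | h2
        · rw [List.getD_append _ _ _ _ (by rw [List.length_set]; exact h2),
            List.getD_append _ _ _ _ h2]
          rw [List.getD_eq_getElem _ _ (by rw [List.length_set]; exact h2), List.getElem_set]
          rw [← List.getD_eq_getElem _ 0 h2]
          split_ifs with hjq
          · subst hjq
            omega
          · exact le_refl _
        · rw [List.getD_append_right _ _ _ _ (by rw [List.length_set]; exact h2),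
            List.getD_append_right _ _ _ _ h2, List.length_set]
      have hjP : jj < (P.getD i []).length := by
        rw [← hlen_lt i h]
        exact hjj
      have := hneg i (by omega) jj hjP
      omega
    · subst heqk
      rw [hQ'k]
      have hP'row : P'.getD k [] = (T.getD k [] ++ [v.getD k 0]) ++
          (P.getD k []).filter (fun x => decide (b ≤ x)) := by
        rw [hProw' k (by omega), hrowlast1]
      rcases Nat.lt_or_ge jj ((T.getD k []).length + 1) with h2 | h2
      · have hval : (P'.getD k []).getD jj 0 < b := by
          rw [hP'row, List.getD_append _ _ _ _ (by
            rw [List.length_append, List.length_singleton]; omega)]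
          have hjj2 : jj < (T.getD k [] ++ [v.getD k 0]).length := by
            rw [List.length_append, List.length_singleton]; omega
          have hmm := getD_mem' 0 hjj2
          rcases List.mem_append.1 hmm with hmm2 | hmm2
          · exact (hTmem k _ hmm2).1
          · simp only [List.mem_singleton] at hmm2
            rw [hmm2]
            exact (hvmem k (by omega)).2
        have hQval : b ≤ (b :: Q.getD k []).getD jj 0 := by
          cases jj with
          | zero => simp
          | succ m =>
            simp only [List.getD_cons_succ]
            apply hQge k
            apply getD_mem' 0
            rw [hlen_k] at hjj
            rw [← hrlen k]
            omega
        omega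
      · have hjj1 : 1 ≤ jj := by omega
        have e1 : (P'.getD k []).getD jj 0 = (P.getD k []).getD (jj - 1) 0 := by
          rw [hP'row, List.getD_append_right _ _ _ _ (by
            rw [List.length_append, List.length_singleton]; omega)]
          conv_rhs => rw [← hsplit k]
          rw [List.getD_append_right _ _ _ _ (by omega)]
          rw [List.length_append, List.length_singleton]
          congr 1
          omega
        have e2 : (b :: Q.getD k []).getD jj 0 = (Q.getD k []).getD (jj - 1) 0 := by
          match jj, hjj1 with
          | m + 1, _ => simp
        have hjP : jj - 1 < (P.getD k []).length := by
          rw [hlen_k] at hjj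
          omega
        have hkP : k < P.length := by
          by_contra hc
          push_neg at hc
          rw [List.getD_eq_default _ _ hc] at hjP
          simp at hjP
        rw [e1, e2]
        exact hneg k hkP (jj - 1) hjP
    · rw [hrow_gt i h] at hjj ⊢
      rw [hQ'ne i (by omega)]
      have hiP : i < P.length := by omega
      exact hneg i hiP jj hjj
  · -- Q' entries ≥ rest bounds
    intro p hp r hr x hx
    obtain ⟨i, hi, rfl⟩ := List.getElem_of_mem hr
    rw [← List.getD_eq_getElem _ [] hi] at hx
    rcases eq_or_ne i k with rfl | hik
    · rw [hQ'k] at hx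
      rcases List.mem_cons.1 hx with rfl | hx
      · rcases hrest p hp with h | h
        · omega
        · omega
      · exact hQge2 p hp k x hx
    · rw [hQ'ne i hik] at hx
      exact hQge2 p hp i x hx
  · -- RUNSAFE
    intro a' b' hhead i hiQ' hmem
    have hp' : (a', b') ∈ rest := List.mem_of_mem_head? hhead
    have hmem' : b' ∈ Q'.getD i [] := by
      rw [List.getD_eq_getElem _ _ hiQ'] at hmem ⊢
      exact hmem
    rcases hrest _ hp' with hlt | ⟨heq, hle⟩
    · exfalso
      simp only at hlt
      rcases eq_or_ne i k with rfl | hik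
      · rw [hQ'k] at hmem'
        rcases List.mem_cons.1 hmem' with heq2 | hmem2
        · omega
        · have := hQge k b' hmem2
          omega
      · rw [hQ'ne i hik] at hmem'
        have := hQge i b' hmem'
        omega
    · simp only at heq hle
      subst heq
      rw [hbelow']
      have h2 := ins2 hTrows hle
      rw [hI2len] at h2
      have hik : i ≤ k := by
        rcases eq_or_ne i k with rfl | hik
        · exact le_refl _
        · rw [hQ'ne i hik] at hmem'
          have hiQ : i < Q.length := by
            by_contra hc
            push_neg at hc
            rw [List.getD_eq_default _ _ hc] at hmem'
            simp at hmem'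
          have := hsafe a b rfl i hiQ hmem'
          rw [hI2len] at this
          omega
      omega


lemma sorted_getD_mono {u w : List ℕ} (hu : List.Pairwise (· ≤ ·) u)
    (hw : List.Pairwise (· ≤ ·) w) (hlen : u.length = w.length)
    (hc : ∀ τ, cnt w τ ≤ cnt u τ) (idx : ℕ) : u.getD idx 0 ≤ w.getD idx 0 := by
  rcases Nat.lt_or_ge idx u.length with h | h
  · by_contra hcon
    push_neg at hcon
    have h1 : idx + 1 ≤ cnt w (w.getD idx 0) := by
      apply le_cnt (by omega)
      intro i hi
      exact sorted_getD_le hw (by omega) (by omega)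
    have h2 : cnt u (w.getD idx 0) ≤ idx := cnt_le_sorted hu h hcon
    have := hc (w.getD idx 0)
    omega
  · rw [List.getD_eq_default _ _ h, List.getD_eq_default _ _ (by omega)]

lemma cnt_sort_add (l1 l2 : List ℕ) (τ : ℕ) :
    cnt (((l1 : Multiset ℕ) + (l2 : Multiset ℕ)).sort (· ≤ ·)) τ = cnt l1 τ + cnt l2 τ := by
  have hperm : (((l1 : Multiset ℕ) + (l2 : Multiset ℕ)).sort (· ≤ ·)).Perm (l1 ++ l2) := by
    rw [← Multiset.coe_eq_coe, Multiset.sort_eq, Multiset.coe_add]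
  rw [cnt, hperm.countP_eq]
  exact cnt_append l1 l2 τ

lemma semistandard_of_cntSS {P Q : List (List ℕ)} (hshape : SameShape P Q)
    (hc : cntSS P Q) : SemistandardNB P Q := by
  intro i hi
  constructor
  · show Multiset.card _ = Multiset.card _
    simp only [Multiset.card_add, Multiset.coe_card]
    have e1 := hshape.2 i
    have e2 := hshape.2 (i + 1)
    omega
  · intro idx
    apply sorted_getD_mono
    · exact Multiset.pairwise_sort _ _
    · exact Multiset.pairwise_sort _ _
    · rw [Multiset.length_sort, Multiset.length_sort]
      simp only [Multiset.card_add, Multiset.coe_card]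
      have e1 := hshape.2 i
      have e2 := hshape.2 (i + 1)
      omega
    · intro τ
      rw [cnt_sort_add, cnt_sort_add]
      exact hc i τ hi

lemma isNegSSNB_of_inv {PQ : List (List ℕ) × List (List ℕ)} (h : Inv PQ.1 PQ.2 []) :
    IsNegSSNB PQ := by
  obtain ⟨hshape, hPs, hQs, hPp, hQp, hne, hc, hneg, _, _⟩ := h
  exact ⟨hshape, hPs, hQs, hPp, hQp, hne, semistandard_of_cntSS hshape hc, hneg⟩

lemma inv_nil (l : List (ℕ × ℕ)) : Inv [] [] l := by
  refine ⟨⟨rfl, fun i => by simp⟩, ?_, ?_, ?_, ?_, ?_, ?_, ?_, ?_, ?_⟩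
  · intro r hr; simp at hr
  · intro r hr; simp at hr
  · intro r hr; simp at hr
  · intro r hr; simp at hr
  · intro r hr; simp at hr
  · intro i τ h; simp at h
  · intro i h; simp at h
  · intro p _ r hr; simp at hr
  · intro a b _ i hi; simp at hi

lemma fold_inv : ∀ (l : List (ℕ × ℕ)) (P Q : List (List ℕ)),
    Inv P Q l → (∀ p ∈ l, 0 < p.1 ∧ p.1 < p.2) → LexSorted l →
    Inv (l.foldl BRSKstep (P, Q)).1 (l.foldl BRSKstep (P, Q)).2 [] := by
  intro l
  induction l with
  | nil => intro P Q h _ _; simpa using h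
  | cons p rest ih =>
    intro P Q h hneg hsort
    obtain ⟨a, b⟩ := p
    rw [List.foldl_cons]
    rw [LexSorted, List.pairwise_cons] at hsort
    have hstep := step h (hneg (a, b) (List.mem_cons_self)).1
      (hneg (a, b) (List.mem_cons_self)).2 hsort.1
    have heta : BRSKstep (P, Q) (a, b) =
        ((BRSKstep (P, Q) (a, b)).1, (BRSKstep (P, Q) (a, b)).2) := rfl
    rw [heta]
    exact ih _ _ hstep (fun q hq => hneg q (List.mem_cons_of_mem _ hq)) hsort.2

end BRSKaux

/-- If `U` is a negative multiset on ℕ² (listed in lexicographic order), then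
`BRSK U` is a negative semistandard notched bitableau. -/
theorem brsk_negative_ssnb (l : List (ℕ × ℕ))
    (hneg : ∀ p ∈ l, 0 < p.1 ∧ p.1 < p.2) (hsort : LexSorted l) :
    IsNegSSNB (BRSK l) := by
  exact BRSKaux.isNegSSNB_of_inv
    (BRSKaux.fold_inv l [] [] (BRSKaux.inv_nil l) hneg hsort)
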